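/- Let A, B : [0,∞) → ℝ be nonnegative differentiable functions satisfying A' = −2νA + (3/(20ν))AB and B' = −4νB − (2/(5ν))AB, with A(0) = A0 and B(0) = B0. Then B is monotonically nonincreasing on [0,∞), and for all t ≥ 1/ν one has B(t) ≤ B0 e^{−2A0/(5ν² e²)}. -/

import Mathlib

/-- For nonnegative differentiable A, B solving the planar system
A' = −2νA + (3/(20ν))AB, B' = −4νB − (2/(5ν))AB, B is monotonically nonincreasing on [0,∞)
and B(t) ≤ B0 e^{−2A0/(5ν²e²)} for all t ≥ 1/ν. -/
theorem B_monotone_and_final_bound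
    (ν A0 B0 : ℝ) (hν : 0 < ν)
    (A B : ℝ → ℝ)
    (hApos : ∀ t : ℝ, 0 ≤ t → 0 ≤ A t)
    (hBpos : ∀ t : ℝ, 0 ≤ t → 0 ≤ B t)
    (hA : ∀ t : ℝ, 0 ≤ t → HasDerivAt A (-2 * ν * A t + 3 / (20 * ν) * A t * B t) t)
    (hB : ∀ t : ℝ, 0 ≤ t → HasDerivAt B (-4 * ν * B t - 2 / (5 * ν) * A t * B t) t)
    (hA0 : A 0 = A0) (hB0 : B 0 = B0) :
    (∀ s t : ℝ, 0 ≤ s → s ≤ t → B t ≤ B s)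
      ∧ (∀ t : ℝ, 1 / ν ≤ t → B t ≤ B0 * Real.exp (-(2 * A0 / (5 * ν ^ 2 * Real.exp 2)))) := by
  -- Part 1: B is antitone on [0, ∞)
  have hmono : AntitoneOn B (Set.Ici 0) := by
    apply antitoneOn_of_deriv_nonpos (convex_Ici 0)
    · exact fun t ht => ((hB t ht).continuousAt).continuousWithinAt
    · intro t ht
      rw [interior_Ici] at ht
      exact ((hB t (le_of_lt ht)).differentiableAt).differentiableWithinAt
    · intro t ht
      rw [interior_Ici] at ht
      rw [(hB t ht.le).deriv]
      have h1 := hBpos t ht.le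
      have h2 := hApos t ht.le
      have h3 : 0 ≤ 2 / (5 * ν) * A t * B t := by positivity
      nlinarith
  have part1 : ∀ s t : ℝ, 0 ≤ s → s ≤ t → B t ≤ B s := by
    intro s t hs hst
    exact hmono hs (le_trans hs hst) hst
  refine ⟨part1, ?_⟩
  -- Step A : A t ≥ A0 * exp (-2) on [0, 1/ν]
  have hApos2 : 0 ≤ A0 := hA0 ▸ hApos 0 le_rfl
  have he2 : ∀ c t : ℝ, HasDerivAt (fun t => Real.exp (c * t)) (Real.exp (c * t) * c) t := by
    intro c t
    have h := ((hasDerivAt_id t).const_mul c).exp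
    simpa using h
  have hgmono : MonotoneOn (fun t => A t * Real.exp (2 * ν * t)) (Set.Ici 0) := by
    apply monotoneOn_of_deriv_nonneg (convex_Ici 0)
    · intro t ht
      exact (((hA t ht).continuousAt).mul (he2 (2 * ν) t).continuousAt).continuousWithinAt
    · intro t ht
      rw [interior_Ici] at ht
      exact (((hA t ht.le).mul (he2 (2 * ν) t))).differentiableAt.differentiableWithinAt
    · intro t ht
      rw [interior_Ici] at ht
      have hd : HasDerivAt (fun t => A t * Real.exp (2 * ν * t)) _ t :=
        (hA t ht.le).mul (he2 (2 * ν) t)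
      rw [hd.deriv]
      have h1 := hBpos t ht.le
      have h2 := hApos t ht.le
      have h3 : 0 < Real.exp (2 * ν * t) := Real.exp_pos _
      have h4 : 0 ≤ 3 / (20 * ν) * A t * B t := by positivity
      nlinarith
  have hAlow : ∀ t : ℝ, 0 ≤ t → t ≤ 1 / ν → A0 * Real.exp (-2) ≤ A t := by
    intro t ht ht'
    have h0 : A 0 * Real.exp (2 * ν * 0) ≤ A t * Real.exp (2 * ν * t) :=
      hgmono (Set.mem_Ici.mpr le_rfl) ht ht
    rw [hA0] at h0
    simp at h0
    have hle : Real.exp (2 * ν * t) ≤ Real.exp 2 := by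
      apply Real.exp_le_exp.mpr
      calc 2 * ν * t ≤ 2 * ν * (1 / ν) := by
            apply mul_le_mul_of_nonneg_left ht' (by positivity)
        _ = 2 := by field_simp
    have hAt := hApos t ht
    have h5 : A0 ≤ A t * Real.exp 2 := le_trans h0 (by nlinarith [Real.exp_pos (2 * ν * t)])
    have h6 : A0 / Real.exp 2 ≤ A t := (div_le_iff₀ (Real.exp_pos 2)).mpr h5
    rw [Real.exp_neg]
    calc A0 * (Real.exp 2)⁻¹ = A0 / Real.exp 2 := by ring
      _ ≤ A t := h6
  -- Step B : h t = B t * exp (c t) is antitone on [0, 1/ν]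
  set c : ℝ := 2 / (5 * ν) * (A0 * Real.exp (-2)) with hc
  have hcnn : 0 ≤ c := by positivity
  have hν' : (0:ℝ) < 1 / ν := by positivity
  have hhanti : AntitoneOn (fun t => B t * Real.exp (c * t)) (Set.Icc 0 (1 / ν)) := by
    apply antitoneOn_of_deriv_nonpos (convex_Icc 0 (1 / ν))
    · intro t ht
      exact (((hB t ht.1).continuousAt).mul (he2 c t).continuousAt).continuousWithinAt
    · intro t ht
      rw [interior_Icc] at ht
      exact ((hB t ht.1.le).mul (he2 c t)).differentiableAt.differentiableWithinAt
    · intro t ht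
      rw [interior_Icc] at ht
      have hd : HasDerivAt (fun t => B t * Real.exp (c * t)) _ t :=
        (hB t ht.1.le).mul (he2 c t)
      rw [hd.deriv]
      have h1 := hBpos t ht.1.le
      have h2 := hAlow t ht.1.le ht.2.le
      have h3 : 0 < Real.exp (c * t) := Real.exp_pos _
      have h5 : (0:ℝ) ≤ 2 / (5 * ν) := by positivity
      have h6 : -4 * ν * B t - 2 / (5 * ν) * A t * B t + c * B t ≤ 0 := by
        rw [hc]
        have h4 : 2 / (5 * ν) * (A0 * Real.exp (-2)) * B t ≤ 2 / (5 * ν) * A t * B t :=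
          mul_le_mul_of_nonneg_right (mul_le_mul_of_nonneg_left h2 h5) h1
        nlinarith
      have heq : (-4 * ν * B t - 2 / (5 * ν) * A t * B t) * Real.exp (c * t)
          + B t * (Real.exp (c * t) * c)
          = Real.exp (c * t) * (-4 * ν * B t - 2 / (5 * ν) * A t * B t + c * B t) := by ring
      rw [heq]
      exact mul_nonpos_iff.mpr (Or.inl ⟨h3.le, h6⟩)
  have hkey : B (1 / ν) * Real.exp (c * (1 / ν)) ≤ B0 := by
    have := hhanti (Set.left_mem_Icc.mpr hν'.le) (Set.right_mem_Icc.mpr hν'.le) hν'.le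
    simpa [hB0] using this
  -- rewrite the exponent
  have hexp : c * (1 / ν) = 2 * A0 / (5 * ν ^ 2 * Real.exp 2) := by
    rw [hc, Real.exp_neg]
    have hne : Real.exp 2 ≠ 0 := (Real.exp_pos 2).ne'
    field_simp
  have hbound : B (1 / ν) ≤ B0 * Real.exp (-(2 * A0 / (5 * ν ^ 2 * Real.exp 2))) := by
    rw [← hexp, Real.exp_neg]
    have hpos : 0 < Real.exp (c * (1 / ν)) := Real.exp_pos _
    calc B (1 / ν) = (B (1 / ν) * Real.exp (c * (1 / ν))) * (Real.exp (c * (1 / ν)))⁻¹ := by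
          field_simp
      _ ≤ B0 * (Real.exp (c * (1 / ν)))⁻¹ :=
          mul_le_mul_of_nonneg_right hkey (inv_nonneg.mpr hpos.le)
  intro t ht
  exact le_trans (part1 (1 / ν) t hν'.le ht) hbound
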